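/- Fast decay of Beta densities: for any ε₀ ∈ (0, 1/2) there exists n₀ > 0 such that for all n > n₀ and all integers k, l ≥ 0 with k + l = n, one has ρ_{k,l}(s) ≤ 3 n^{3/2} · exp(-(1/18) n^{2ε₀}) whenever s ∈ [0,1] satisfies |s - k/n| ≥ n^{-1/2+ε₀}. -/

import Mathlib

/-- The density of the Beta distribution `Be(k+1, l+1)` on `[0,1]`. -/
noncomputable def rho (k l : ℕ) (s : ℝ) : ℝ :=
  ((k + l + 1).factorial : ℝ) / (k.factorial * l.factorial) * s ^ k * (1 - s) ^ l

-- core: 1 - v ≤ exp (-(v + v^2/2)) for v ∈ [0,1]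
lemma core_exp (v : ℝ) (h0 : 0 ≤ v) (h1 : v ≤ 1) :
    1 - v ≤ Real.exp (-(v + v^2/2)) := by
  have hexp : Real.exp v ≤ 1 + v + v^2/2 + (2/9) * v^3 := by
    have h := Real.exp_bound' h0 h1 (n := 3) (by norm_num)
    have hs : (∑ m ∈ Finset.range 3, v ^ m / m.factorial) = 1 + v + v^2/2 := by
      simp [Finset.sum_range_succ, Nat.factorial]
    rw [hs] at h
    calc Real.exp v ≤ 1 + v + v^2/2 + v ^ 3 * (3+1)/(Nat.factorial 3 * 3) := h
      _ = 1 + v + v^2/2 + (2/9) * v^3 := by norm_num [Nat.factorial]; ring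
  have h2 : (1 - v) * Real.exp v ≤ 1 - v^2/2 := by
    nlinarith [Real.exp_pos v, sq_nonneg v]
  have h3 : 1 - v^2/2 ≤ Real.exp (-(v^2/2)) := by
    have := Real.add_one_le_exp (-(v^2/2)); linarith
  have h4 : (1 - v) * Real.exp v ≤ Real.exp (-(v^2/2)) := h2.trans h3
  have h5 : Real.exp (-(v + v^2/2)) = Real.exp (-(v^2/2)) * Real.exp (-v) := by
    rw [← Real.exp_add]; ring_nf
  rw [h5]
  have := mul_le_mul_of_nonneg_right h4 (Real.exp_pos (-v)).le
  rwa [mul_assoc, ← Real.exp_add, add_neg_cancel, Real.exp_zero, mul_one] at this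

-- binomial term ≤ 1
lemma binom_term_le_one (n k l : ℕ) (hkl : k + l = n) (hn : 0 < n) :
    (n.choose k : ℝ) * ((k:ℝ)/n)^k * ((l:ℝ)/n)^l ≤ 1 := by
  set p : ℝ := (k:ℝ)/n
  set q : ℝ := (l:ℝ)/n
  have hn' : (0:ℝ) < n := by exact_mod_cast hn
  have hp : 0 ≤ p := by positivity
  have hq : 0 ≤ q := by positivity
  have hpq : p + q = 1 := by
    show (k:ℝ)/n + (l:ℝ)/n = 1
    rw [← add_div, div_eq_one_iff_eq hn'.ne']; exact_mod_cast hkl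
  have hexp := add_pow p q n
  rw [hpq, one_pow] at hexp
  have hk : k ∈ Finset.range (n+1) := by
    simp only [Finset.mem_range]; omega
  have hterm := Finset.single_le_sum
    (f := fun i => p ^ i * q ^ (n - i) * (n.choose i : ℝ))
    (fun i _ => by positivity) hk
  rw [← hexp] at hterm
  have hnk : n - k = l := by omega
  simp only [hnk] at hterm
  linarith [hterm]

-- main estimate: one-sided (s ≥ k/n)
lemma main_est (n k l : ℕ) (hkl : k + l = n) (hn : 0 < n) (s : ℝ)
    (hs1 : s ≤ 1) (hps : (k:ℝ)/n ≤ s) :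
    s^k * (1-s)^l ≤ ((k:ℝ)/n)^k * ((l:ℝ)/n)^l
      * Real.exp (-(n:ℝ) * (s - (k:ℝ)/n)^2 / 2) := by
  have hn' : (0:ℝ) < n := by exact_mod_cast hn
  set p : ℝ := (k:ℝ)/n with hpdef
  set q : ℝ := (l:ℝ)/n with hqdef
  set t : ℝ := s - p with htdef
  have ht0 : 0 ≤ t := by simp only [htdef, sub_nonneg]; exact hps
  have hpq : p + q = 1 := by
    show (k:ℝ)/n + (l:ℝ)/n = 1
    rw [← add_div, div_eq_one_iff_eq hn'.ne']; exact_mod_cast hkl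
  have htq : t ≤ q := by
    have : s = p + t := by ring
    nlinarith
  have hp0 : 0 ≤ p := by positivity
  have hq0 : 0 ≤ q := by positivity
  have hs0 : 0 ≤ s := le_trans hp0 hps
  -- bound 1 : s^k ≤ p^k * exp (n*t)
  have b1 : s^k ≤ p^k * Real.exp ((n:ℝ) * t) := by
    rcases Nat.eq_zero_or_pos k with hk | hk
    · subst hk
      simp only [pow_zero, one_mul]
      exact Real.one_le_exp (mul_nonneg hn'.le ht0)
    · have hpk : (0:ℝ) < p := by
        have : (0:ℝ) < (k:ℝ) := by exact_mod_cast hk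
        positivity
      have h1 : s = p * (1 + t/p) := by field_simp [htdef]; linarith
      have h2 : (1 + t/p) ≤ Real.exp (t/p) := by
        have := Real.add_one_le_exp (t/p); linarith
      have h4 : (1 + t/p)^k ≤ Real.exp (t/p) ^ k :=
        pow_le_pow_left₀ (by positivity) h2 k
      have h6 : (k:ℝ) * (t/p) = (n:ℝ) * t := by
        rw [hpdef]; field_simp
      calc s^k = p^k * (1 + t/p)^k := by rw [h1, mul_pow]
        _ ≤ p^k * Real.exp (t/p) ^ k :=
            mul_le_mul_of_nonneg_left h4 (by positivity)
        _ = p^k * Real.exp ((n:ℝ) * t) := by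
            rw [← Real.exp_nat_mul, h6]
  -- bound 2 : (1-s)^l ≤ q^l * exp (-(n*t) - n*t^2/2)
  have b2 : (1-s)^l ≤ q^l * Real.exp (-((n:ℝ) * t) - (n:ℝ)*t^2/2) := by
    rcases Nat.eq_zero_or_pos l with hl | hl
    · subst hl
      have hq0' : q = 0 := by simp [hqdef]
      have ht00 : t = 0 := le_antisymm (by rw [← hq0']; exact htq) ht0
      simp [ht00]
    · have hql : (0:ℝ) < q := by
        have : (0:ℝ) < (l:ℝ) := by exact_mod_cast hl
        positivity
      set v : ℝ := t / q with hvdef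
      have hv0 : 0 ≤ v := by positivity
      have hv1 : v ≤ 1 := by rw [hvdef]; exact (div_le_one hql).mpr htq
      have h1 : 1 - s = q * (1 - v) := by
        rw [hvdef]; field_simp; linarith [hpq]
      have h2 : 1 - v ≤ Real.exp (-(v + v^2/2)) := core_exp v hv0 hv1
      have h4 : (1-v)^l ≤ Real.exp (-(v + v^2/2)) ^ l :=
        pow_le_pow_left₀ (by linarith) h2 l
      have h5 : Real.exp (-(v + v^2/2)) ^ l = Real.exp ((l:ℝ) * (-(v + v^2/2))) := by
        rw [← Real.exp_nat_mul]
      have h6 : (l:ℝ) * (-(v + v^2/2)) ≤ -((n:ℝ) * t) - (n:ℝ)*t^2/2 := by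
        have e1 : (l:ℝ) * v = (n:ℝ) * t := by
          rw [hvdef, hqdef]; field_simp
        have e2 : (l:ℝ) * (v^2/2) = (n:ℝ) * t^2 / (2*q) := by
          rw [hvdef, hqdef]; field_simp
        have e3 : (n:ℝ) * t^2 / 2 ≤ (n:ℝ) * t^2 / (2*q) := by
          apply div_le_div_of_nonneg_left (by positivity) (by positivity)
          nlinarith
        nlinarith
      calc (1-s)^l = q^l * (1-v)^l := by rw [h1, mul_pow]
        _ ≤ q^l * Real.exp (-(v + v^2/2)) ^ l :=
            mul_le_mul_of_nonneg_left h4 (by positivity)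
        _ = q^l * Real.exp ((l:ℝ) * (-(v + v^2/2))) := by rw [h5]
        _ ≤ q^l * Real.exp (-((n:ℝ) * t) - (n:ℝ)*t^2/2) :=
            mul_le_mul_of_nonneg_left (Real.exp_le_exp.mpr h6) (by positivity)
  calc s^k * (1-s)^l ≤ (p^k * Real.exp ((n:ℝ)*t)) * (q^l * Real.exp (-((n:ℝ) * t) - (n:ℝ)*t^2/2)) :=
        mul_le_mul b1 b2 (pow_nonneg (by linarith) l) (by positivity)
    _ = p^k * q^l * Real.exp (-(n:ℝ) * t^2 / 2) := by
        rw [mul_mul_mul_comm, ← Real.exp_add]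
        ring_nf
    _ = p^k * q^l * Real.exp (-(n:ℝ) * (s - p)^2 / 2) := by rw [← htdef]

theorem stmt_6 (ε₀ : ℝ) (hε₀ : ε₀ ∈ Set.Ioo (0:ℝ) (1/2)) :
    ∃ n₀ : ℕ, 0 < n₀ ∧ ∀ n : ℕ, n₀ < n → ∀ k l : ℕ, k + l = n →
      ∀ s ∈ Set.Icc (0:ℝ) 1, (n : ℝ) ^ (-(1/2 : ℝ) + ε₀) ≤ |s - (k : ℝ) / (n : ℝ)| →
        rho k l s ≤ 3 * (n : ℝ) ^ ((3 : ℝ) / 2) * Real.exp (-(1/18) * (n : ℝ) ^ (2 * ε₀)) := by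
  obtain ⟨hε1, hε2⟩ := hε₀
  refine ⟨1, one_pos, ?_⟩
  intro n hn1 k l hkl s hs hfar
  obtain ⟨hs0, hs1⟩ := hs
  have hn : 0 < n := by omega
  have hn' : (0:ℝ) < n := by exact_mod_cast hn
  have hn1' : (1:ℝ) ≤ n := by exact_mod_cast hn
  set p : ℝ := (k:ℝ)/n with hpdef
  set q : ℝ := (l:ℝ)/n with hqdef
  have hpq : p + q = 1 := by
    show (k:ℝ)/n + (l:ℝ)/n = 1
    rw [← add_div, div_eq_one_iff_eq hn'.ne']; exact_mod_cast hkl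
  -- rewrite rho
  have hkn : k ≤ n := by omega
  have hfac : (n.factorial : ℝ) = (n.choose k) * k.factorial * l.factorial := by
    have := Nat.choose_mul_factorial_mul_factorial hkn
    rw [show n - k = l by omega] at this
    exact_mod_cast this.symm
  have hrho : rho k l s = ((n:ℝ)+1) * (n.choose k) * (s^k * (1-s)^l) := by
    unfold rho
    rw [hkl]
    have : ((n+1).factorial : ℝ) = ((n:ℝ)+1) * n.factorial := by
      rw [Nat.factorial_succ]; push_cast; ring
    rw [this, hfac]
    have h1 : (k.factorial : ℝ) ≠ 0 := by positivity
    have h2 : (l.factorial : ℝ) ≠ 0 := by positivity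
    field_simp
  -- the product bound
  have key : s^k * (1-s)^l ≤ p^k * q^l * Real.exp (-(n:ℝ) * (s - p)^2 / 2) := by
    rcases le_or_gt p s with hps | hps
    · exact main_est n k l hkl hn s hs1 hps
    · have h := main_est n l k (by omega) hn (1-s) (by linarith) (by
        rw [← hqdef]; linarith)
      rw [← hqdef, ← hpdef] at h
      have e1 : 1 - (1-s) = s := by ring
      have e2 : (1 - s - q)^2 = (s - p)^2 := by
        have : 1 - s - q = -(s - p) := by linarith
        rw [this]; ring
      rw [e1, e2] at h
      calc s^k * (1-s)^l = (1-s)^l * s^k := by ring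
        _ ≤ q^l * p^k * Real.exp (-(n:ℝ) * (s - p)^2 / 2) := h
        _ = p^k * q^l * Real.exp (-(n:ℝ) * (s - p)^2 / 2) := by ring
  have hbin := binom_term_le_one n k l hkl hn
  rw [← hpdef, ← hqdef] at hbin
  -- full bound
  have hbound : rho k l s ≤ ((n:ℝ)+1) * Real.exp (-(n:ℝ) * (s - p)^2 / 2) := by
    rw [hrho]
    calc ((n:ℝ)+1) * (n.choose k) * (s^k * (1-s)^l)
        ≤ ((n:ℝ)+1) * (n.choose k) * (p^k * q^l * Real.exp (-(n:ℝ) * (s - p)^2 / 2)) := by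
          apply mul_le_mul_of_nonneg_left key (by positivity)
      _ = ((n:ℝ)+1) * ((n.choose k) * p^k * q^l) * Real.exp (-(n:ℝ) * (s - p)^2 / 2) := by ring
      _ ≤ ((n:ℝ)+1) * 1 * Real.exp (-(n:ℝ) * (s - p)^2 / 2) := by
          apply mul_le_mul_of_nonneg_right _ (Real.exp_pos _).le
          apply mul_le_mul_of_nonneg_left hbin (by positivity)
      _ = ((n:ℝ)+1) * Real.exp (-(n:ℝ) * (s - p)^2 / 2) := by ring
  -- exponent comparison
  have hδ : ((n:ℝ) ^ (-(1/2 : ℝ) + ε₀))^2 * n = (n:ℝ) ^ (2*ε₀) := by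
    rw [← Real.rpow_natCast ((n:ℝ) ^ (-(1/2 : ℝ) + ε₀)) 2, ← Real.rpow_mul hn'.le]
    nth_rewrite 2 [show (n:ℝ) = (n:ℝ) ^ (1:ℝ) by rw [Real.rpow_one]]
    rw [← Real.rpow_add hn']
    norm_num
    ring_nf
  have hsq : ((n:ℝ) ^ (-(1/2 : ℝ) + ε₀))^2 ≤ (s - p)^2 := by
    have h1 : (0:ℝ) ≤ (n:ℝ) ^ (-(1/2 : ℝ) + ε₀) := by positivity
    calc ((n:ℝ) ^ (-(1/2 : ℝ) + ε₀))^2 ≤ |s - p|^2 := by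
          apply pow_le_pow_left₀ h1 hfar
      _ = (s - p)^2 := sq_abs _
  have hexp_cmp : Real.exp (-(n:ℝ) * (s - p)^2 / 2) ≤ Real.exp (-(1/18) * (n:ℝ) ^ (2*ε₀)) := by
    apply Real.exp_le_exp.mpr
    have h2 : (n:ℝ) ^ (2*ε₀) ≤ (n:ℝ) * (s-p)^2 := by
      rw [← hδ]
      calc ((n:ℝ) ^ (-(1/2 : ℝ) + ε₀))^2 * n ≤ (s-p)^2 * n := by
            apply mul_le_mul_of_nonneg_right hsq hn'.le
        _ = (n:ℝ) * (s-p)^2 := by ring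
    have h3 : (0:ℝ) < (n:ℝ) ^ (2*ε₀) := by positivity
    nlinarith
  have hnn : ((n:ℝ)+1) ≤ 3 * (n:ℝ) ^ ((3:ℝ)/2) := by
    have h1 : (n:ℝ) ≤ (n:ℝ) ^ ((3:ℝ)/2) := by
      nth_rewrite 1 [show (n:ℝ) = (n:ℝ) ^ (1:ℝ) by rw [Real.rpow_one]]
      exact Real.rpow_le_rpow_of_exponent_le hn1' (by norm_num)
    linarith
  calc rho k l s ≤ ((n:ℝ)+1) * Real.exp (-(n:ℝ) * (s - p)^2 / 2) := hbound
    _ ≤ (3 * (n:ℝ) ^ ((3:ℝ)/2)) * Real.exp (-(1/18) * (n:ℝ) ^ (2*ε₀)) := by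
        apply mul_le_mul hnn hexp_cmp (Real.exp_pos _).le (by positivity)
    _ = 3 * (n:ℝ) ^ ((3:ℝ)/2) * Real.exp (-(1/18) * (n:ℝ) ^ (2*ε₀)) := by ring
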